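/- Let α ∈ (-1,1) and φ_m(z;α), φ_m*(z;α) the orthonormal Geronimus polynomials as above. Set b_m(z) = φ_m(z;α)/φ_m*(z;α). With φ(z)=z+1+r(z), ψ(z)=z+1-r(z), ε(z)=ψ(z)/φ(z), and r(z) the branch of sqrt((z-1)²+4α²z) holomorphic off Δ_α with r(z)/z→1 at ∞, for every n ≥ 0 and z in the open unit disk: b_{n+1}(z) = (φ(z) - 2(1+α) - ε^{n+1}(z)(ψ(z) - 2(1+α))) / (φ(z) - 2(1+α)z - ε^{n+1}(z)(ψ(z) - 2(1+α)z)). -/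

import Mathlib

/-- Monic Geronimus polynomials `Φ_m` and their reciprocals `Φ_m^*`, defined by the
Szegő recurrence with constant recurrence coefficient `α`. -/
noncomputable def geronimusPhi (α : ℂ) : ℕ → (ℂ → ℂ) × (ℂ → ℂ)
  | 0 => (fun _ => 1, fun _ => 1)
  | m + 1 =>
      (fun z => z * (geronimusPhi α m).1 z - α * (geronimusPhi α m).2 z,
       fun z => (geronimusPhi α m).2 z - α * z * (geronimusPhi α m).1 z)

/-- Closed form for the Geronimus polynomials in terms of the "eigenvalues"
`(z+1±r)/2` of the Szegő transfer matrix, stated without divisions. -/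
lemma geronimus_closed_form (a z r : ℂ) (hr : r ^ 2 = (z - 1) ^ 2 + 4 * a ^ 2 * z) (m : ℕ) :
    2 ^ (m + 1) * r * (geronimusPhi a m).1 z
      = (z + 1 + r - 2 * (1 + a)) * (z + 1 + r) ^ m
        - (z + 1 - r - 2 * (1 + a)) * (z + 1 - r) ^ m ∧
    2 ^ (m + 1) * r * (geronimusPhi a m).2 z
      = (z + 1 + r - 2 * (1 + a) * z) * (z + 1 + r) ^ m
        - (z + 1 - r - 2 * (1 + a) * z) * (z + 1 - r) ^ m := by
  induction m with
  | zero => constructor <;> (simp only [geronimusPhi]; ring)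
  | succ m ih =>
    obtain ⟨h1, h2⟩ := ih
    constructor
    · show 2 ^ (m + 2) * r * (z * (geronimusPhi a m).1 z - a * (geronimusPhi a m).2 z) = _
      linear_combination 2 * z * h1 - 2 * a * h2 + ((z + 1 - r) ^ m - (z + 1 + r) ^ m) * hr
    · show 2 ^ (m + 2) * r * ((geronimusPhi a m).2 z - a * z * (geronimusPhi a m).1 z) = _
      linear_combination 2 * h2 - 2 * a * z * h1 + ((z + 1 - r) ^ m - (z + 1 + r) ^ m) * hr

/-- The discriminant `(z-1)^2 + 4α^2 z` does not vanish in the open unit disk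
for real `α ∈ (-1,1)`. -/
lemma geronimus_disc_ne_zero (α : ℝ) (hα : α ∈ Set.Ioo (-1 : ℝ) 1) (z : ℂ)
    (hz : ‖z‖ < 1) : (z - 1) ^ 2 + 4 * (α : ℂ) ^ 2 * z ≠ 0 := by
  intro h
  obtain ⟨hα1, hα2⟩ := hα
  have hα2' : α ^ 2 < 1 := by nlinarith
  have hz' : z.re ^ 2 + z.im ^ 2 < 1 := by
    have h1 : ‖z‖ ^ 2 < 1 := by nlinarith [norm_nonneg z]
    rw [Complex.sq_norm, Complex.normSq_apply] at h1
    nlinarith [h1]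
  have hre := congrArg Complex.re h
  have him := congrArg Complex.im h
  simp only [Complex.add_re, Complex.add_im, Complex.mul_re, Complex.mul_im, Complex.sub_re,
    Complex.sub_im, Complex.one_re, Complex.one_im, Complex.ofReal_re, Complex.ofReal_im,
    Complex.zero_re, Complex.zero_im, pow_two, Complex.mul_re, Complex.mul_im,
    Complex.re_ofNat, Complex.im_ofNat] at hre him
  set x := z.re
  set y := z.im
  have hcase : y * (x - 1 + 2 * α ^ 2) = 0 := by nlinarith [him]
  rcases mul_eq_zero.mp hcase with hy0 | hx0
  · rw [hy0] at hre hz'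
    rcases le_or_gt x 0 with hx | hx
    · nlinarith [sq_nonneg (x + 1),
        mul_nonneg (neg_nonneg.mpr hx) (by linarith : (0:ℝ) ≤ 1 - α ^ 2)]
    · nlinarith [sq_nonneg (x - 1), mul_nonneg (sq_nonneg α) hx.le]
  · nlinarith [hre, hx0, hz', sq_nonneg α]

theorem stmt_11 (α : ℝ) (hα : α ∈ Set.Ioo (-1 : ℝ) 1) (r : ℂ → ℂ)
    (hr_cont : ContinuousOn r (Metric.ball (0 : ℂ) 1))
    (hr_sq : ∀ z ∈ Metric.ball (0 : ℂ) 1, (r z) ^ 2 = (z - 1) ^ 2 + 4 * (α : ℂ) ^ 2 * z)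
    (hr0 : r 0 = 1) (n : ℕ) (z : ℂ) (hz : z ∈ Metric.ball (0 : ℂ) 1) :
    (geronimusPhi (α : ℂ) (n + 1)).1 z / (geronimusPhi (α : ℂ) (n + 1)).2 z
      = ((z + 1 + r z) - 2 * (1 + (α : ℂ))
            - (((z + 1 - r z) / (z + 1 + r z)) ^ (n + 1)) * ((z + 1 - r z) - 2 * (1 + (α : ℂ))))
        / ((z + 1 + r z) - 2 * (1 + (α : ℂ)) * z
            - (((z + 1 - r z) / (z + 1 + r z)) ^ (n + 1)) * ((z + 1 - r z) - 2 * (1 + (α : ℂ)) * z)) := by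
  have hz1 : ‖z‖ < 1 := by
    simpa [Metric.mem_ball, Complex.dist_eq] using hz
  have hrsq := hr_sq z hz
  have hd : (z - 1) ^ 2 + 4 * (α : ℂ) ^ 2 * z ≠ 0 := geronimus_disc_ne_zero α hα z hz1
  have hrz : r z ≠ 0 := by
    intro h0
    apply hd
    rw [← hrsq, h0]; ring
  have ha2 : ((α : ℂ)) ^ 2 ≠ 1 := by
    intro h
    have h' : (α : ℝ) ^ 2 = 1 := by exact_mod_cast h
    obtain ⟨h1, h2⟩ := hα
    nlinarith
  have hμ : z + 1 + r z ≠ 0 := by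
    intro h
    have hr' : r z = -(z + 1) := by linear_combination h
    have hzz : z * ((α : ℂ) ^ 2 - 1) = 0 := by
      have := hrsq
      rw [hr'] at this
      linear_combination -this / 4
    rcases mul_eq_zero.mp hzz with hz0 | hc
    · rw [hz0, hr0] at hr'
      norm_num at hr'
    · exact ha2 (by linear_combination hc)
  obtain ⟨h1, h2⟩ := geronimus_closed_form (α : ℂ) z (r z) hrsq (n + 1)
  have hμk : (z + 1 + r z) ^ (n + 1) ≠ 0 := pow_ne_zero _ hμ
  have hc2 : (2 : ℂ) ^ (n + 1 + 1) * r z ≠ 0 :=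
    mul_ne_zero (pow_ne_zero _ two_ne_zero) hrz
  have hnum : (z + 1 + r z) - 2 * (1 + (α : ℂ))
      - (((z + 1 - r z) / (z + 1 + r z)) ^ (n + 1)) * ((z + 1 - r z) - 2 * (1 + (α : ℂ)))
      = ((z + 1 + r z - 2 * (1 + (α : ℂ))) * (z + 1 + r z) ^ (n + 1)
          - (z + 1 - r z - 2 * (1 + (α : ℂ))) * (z + 1 - r z) ^ (n + 1))
        / (z + 1 + r z) ^ (n + 1) := by
    rw [div_pow]
    field_simp
  have hden : (z + 1 + r z) - 2 * (1 + (α : ℂ)) * z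
      - (((z + 1 - r z) / (z + 1 + r z)) ^ (n + 1)) * ((z + 1 - r z) - 2 * (1 + (α : ℂ)) * z)
      = ((z + 1 + r z - 2 * (1 + (α : ℂ)) * z) * (z + 1 + r z) ^ (n + 1)
          - (z + 1 - r z - 2 * (1 + (α : ℂ)) * z) * (z + 1 - r z) ^ (n + 1))
        / (z + 1 + r z) ^ (n + 1) := by
    rw [div_pow]
    field_simp
  rw [hnum, hden, div_div_div_comm, div_self hμk, div_one, ← h1, ← h2,
    mul_div_mul_left _ _ hc2]
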